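/- Let X be a topological space and let G be the subgroup of bounded functions X → ℤ consisting of all functions of the form h + n·𝟙, where h is a bounded residual function, n ∈ ℤ, and 𝟙 is the constant function 1. Then G is a Specker group: for every f ∈ G and every n ∈ ℤ, the characteristic function of f⁻¹(n) belongs to G. -/

import Mathlib

/-- A function `f : X → ℤ` on a topological space is *residual* if `f⁻¹(0)`
contains an open dense subset of `X`. -/
def IsResidualFn {X : Type*} [TopologicalSpace X] (f : X → ℤ) : Prop :=
  ∃ U : Set X, IsOpen U ∧ Dense U ∧ U ⊆ f ⁻¹' {0}

/-- A function `f : X → ℤ` is *bounded* if `|f x| ≤ N` for some `N`. -/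
def IsBoundedFn {X : Type*} (f : X → ℤ) : Prop :=
  ∃ N : ℤ, ∀ x : X, |f x| ≤ N

/-- Membership in the group `G = QZ_b(X) + ℤ·𝟙`: `f = h + n·𝟙` with `h` a bounded
residual function and `n ∈ ℤ`. -/
def MemG {X : Type*} [TopologicalSpace X] (f : X → ℤ) : Prop :=
  ∃ (h : X → ℤ) (n : ℤ), IsResidualFn h ∧ IsBoundedFn h ∧ f = h + Function.const X n

/-- The group `G = QZ_b(X) + ℤ·𝟙` is a Specker group: for every `f ∈ G` and every
`n ∈ ℤ`, the characteristic function of `f⁻¹(n)` belongs to `G`. -/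
theorem specker_residual_plus_constants {X : Type*} [TopologicalSpace X]
    (f : X → ℤ) (hf : MemG f) (n : ℤ) :
    MemG (fun x => if f x = n then (1 : ℤ) else 0) := by
  obtain ⟨h, m, ⟨U, hU, hD, hsub⟩, _, rfl⟩ := hf
  set c : ℤ := if m = n then 1 else 0 with hc
  refine ⟨fun x => (if h x + m = n then (1 : ℤ) else 0) - c, c, ⟨U, hU, hD, ?_⟩, ⟨2, ?_⟩, ?_⟩
  · intro x hx
    have hx0 : h x = 0 := hsub hx
    simp [hx0, hc]
  · intro x
    simp only [hc]
    split <;> split <;> norm_num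
  · funext x
    simp [Pi.add_apply, Function.const_apply]
    rfl
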